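/- If the DM-TWC satisfies condition (a) and condition (b2), then C_I = C_O. -/

import Mathlib

open scoped BigOperators

/-- `P` is a probability distribution on the finite alphabet `A`. -/
def IsDist {A : Type*} [Fintype A] (P : A → ℝ) : Prop :=
  (∀ a, 0 ≤ P a) ∧ ∑ a, P a = 1

/-- Input–output mutual information 𝓘(P, W) (in bits) of a channel `W`
from the finite alphabet `A` to the finite alphabet `B` under input distribution `P`. -/
noncomputable def mutInfo {A B : Type*} [Fintype A] [Fintype B]
    (P : A → ℝ) (W : A → B → ℝ) : ℝ :=
  ∑ a, ∑ b, P a * W a b * Real.logb 2 (W a b / ∑ a', P a' * W a' b)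

/-- Shannon entropy (base 2) of a distribution on a finite alphabet. -/
noncomputable def ent {B : Type*} [Fintype B] (Q : B → ℝ) : ℝ :=
  -∑ b, Q b * Real.logb 2 (Q b)

section TWC

variable {X1 X2 Y1 Y2 : Type*} [Fintype X1] [Fintype X2] [Fintype Y1] [Fintype Y2]

/-- A joint input distribution on `X1 × X2`. -/
def IsJointDist (P : X1 → X2 → ℝ) : Prop :=
  (∀ x1 x2, 0 ≤ P x1 x2) ∧ ∑ x1, ∑ x2, P x1 x2 = 1

/-- Marginal of a joint input distribution on `X1`. -/
noncomputable def margin1 (P : X1 → X2 → ℝ) (x1 : X1) : ℝ := ∑ x2, P x1 x2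

/-- Marginal of a joint input distribution on `X2`. -/
noncomputable def margin2 (P : X1 → X2 → ℝ) (x2 : X2) : ℝ := ∑ x1, P x1 x2

/-- Conditional distribution P_{X₁|X₂=x₂}. -/
noncomputable def cond1given2 (P : X1 → X2 → ℝ) (x2 : X2) (x1 : X1) : ℝ :=
  P x1 x2 / margin2 P x2

/-- Conditional distribution P_{X₂|X₁=x₁}. -/
noncomputable def cond2given1 (P : X1 → X2 → ℝ) (x1 : X1) (x2 : X2) : ℝ :=
  P x1 x2 / margin1 P x1

/-- The conditional mutual information I(X₁;Y₂|X₂) under the joint input distribution `P`,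
where `W2` is the marginal channel P_{Y₂|X₁,X₂}. -/
noncomputable def condMI12 (P : X1 → X2 → ℝ) (W2 : X1 → X2 → Y2 → ℝ) : ℝ :=
  ∑ x2, margin2 P x2 * mutInfo (cond1given2 P x2) (fun x1 => W2 x1 x2)

/-- The conditional mutual information I(X₂;Y₁|X₁) under the joint input distribution `P`,
where `W1` is the marginal channel P_{Y₁|X₁,X₂}. -/
noncomputable def condMI21 (P : X1 → X2 → ℝ) (W1 : X1 → X2 → Y1 → ℝ) : ℝ :=
  ∑ x1, margin1 P x1 * mutInfo (cond2given1 P x1) (fun x2 => W1 x1 x2)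

/-- The rate region 𝓡(P_{X₁,X₂}). -/
noncomputable def rateRegion (W1 : X1 → X2 → Y1 → ℝ) (W2 : X1 → X2 → Y2 → ℝ)
    (P : X1 → X2 → ℝ) : Set (ℝ × ℝ) :=
  {r | 0 ≤ r.1 ∧ r.1 ≤ condMI12 P W2 ∧ 0 ≤ r.2 ∧ r.2 ≤ condMI21 P W1}

/-- Shannon's inner bound C_I: the closure of the convex hull of the union of the
rate regions of all product input distributions. -/
noncomputable def innerBound (W1 : X1 → X2 → Y1 → ℝ) (W2 : X1 → X2 → Y2 → ℝ) :
    Set (ℝ × ℝ) :=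
  closure (convexHull ℝ
    (⋃ P ∈ {P : X1 → X2 → ℝ |
        ∃ P1 P2, IsDist P1 ∧ IsDist P2 ∧ P = fun x1 x2 => P1 x1 * P2 x2},
      rateRegion W1 W2 P))

/-- Shannon's outer bound C_O: the union of the rate regions of all joint input
distributions. -/
noncomputable def outerBound (W1 : X1 → X2 → Y1 → ℝ) (W2 : X1 → X2 → Y2 → ℝ) :
    Set (ℝ × ℝ) :=
  ⋃ P ∈ {P : X1 → X2 → ℝ | IsJointDist P}, rateRegion W1 W2 P

/-- The largest input–output mutual information of the one-way channel
P_{Y₂|X₁,X₂=x₂}. -/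
noncomputable def capAt (W2 : X1 → X2 → Y2 → ℝ) (x2 : X2) : ℝ :=
  sSup {I | ∃ P : X1 → ℝ, IsDist P ∧ I = mutInfo P (fun x1 => W2 x1 x2)}

/-- α*: how close the channels {P_{Y₂|X₁,X₂=x₂}} are to having a common optimal
input distribution. -/
noncomputable def alphaStar (W2 : X1 → X2 → Y2 → ℝ) : ℝ :=
  sInf {a | ∃ Pt : X1 → ℝ, IsDist Pt ∧
    a = ⨆ x2, |mutInfo Pt (fun x1 => W2 x1 x2) - capAt W2 x2|}

/-- β*: the degree of invariance in the input–output mutual information of the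
channels {P_{Y₁|X₁=x₁,X₂}}. -/
noncomputable def betaStar (W1 : X1 → X2 → Y1 → ℝ) : ℝ :=
  sSup {b | ∃ (P : X2 → ℝ) (x1 x1' : X1), IsDist P ∧ x1 ≠ x1' ∧
    b = |mutInfo P (fun x2 => W1 x1 x2) - mutInfo P (fun x2 => W1 x1' x2)|}

/-- I*₁ = max_{x₂} max_{P} 𝓘(P, P_{Y₂|X₁,X₂=x₂}). -/
noncomputable def IStar1 (W2 : X1 → X2 → Y2 → ℝ) : ℝ :=
  sSup {I | ∃ (x2 : X2) (P : X1 → ℝ), IsDist P ∧ I = mutInfo P (fun x1 => W2 x1 x2)}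

/-- I*₂ = max_{x₁} max_{P} 𝓘(P, P_{Y₁|X₁=x₁,X₂}). -/
noncomputable def IStar2 (W1 : X1 → X2 → Y1 → ℝ) : ℝ :=
  sSup {I | ∃ (x1 : X1) (P : X2 → ℝ), IsDist P ∧ I = mutInfo P (fun x2 => W1 x1 x2)}

/-- Condition (a): `Pstar` is a common optimal input distribution for the channels
{P_{Y₂|X₁,X₂=x₂} : x₂ ∈ 𝒳₂}. -/
def CondA (W2 : X1 → X2 → Y2 → ℝ) (Pstar : X1 → ℝ) : Prop :=
  IsDist Pstar ∧ ∀ x2 : X2, ∀ P : X1 → ℝ, IsDist P →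
    mutInfo P (fun x1 => W2 x1 x2) ≤ mutInfo Pstar (fun x1 => W2 x1 x2)

/-- Condition (b1): for every input distribution on 𝒳₂, the input–output mutual
information of P_{Y₁|X₁=x₁,X₂} does not depend on x₁. -/
def CondB1 (W1 : X1 → X2 → Y1 → ℝ) : Prop :=
  ∀ P : X2 → ℝ, IsDist P → ∀ x1 x1' : X1,
    mutInfo P (fun x2 => W1 x1 x2) = mutInfo P (fun x2 => W1 x1' x2)

/-- H(Y₁|X₁,X₂) under the joint input distribution `P`. -/
noncomputable def condEntFull (P : X1 → X2 → ℝ) (W1 : X1 → X2 → Y1 → ℝ) : ℝ :=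
  ∑ x1, ∑ x2, P x1 x2 * ent (W1 x1 x2)

/-- H(Y₁|X₁) under the joint input distribution `P`. -/
noncomputable def condEntY1X1 (P : X1 → X2 → ℝ) (W1 : X1 → X2 → Y1 → ℝ) : ℝ :=
  ∑ x1, margin1 P x1 * ent (fun y1 => ∑ x2, cond2given1 P x1 x2 * W1 x1 x2 y1)

/-- Condition (b2), part (i): H(Y₁|X₁,X₂) depends on the joint input distribution
only through its marginal on 𝒳₂. -/
def CondB2i (W1 : X1 → X2 → Y1 → ℝ) : Prop :=
  ∀ P Q : X1 → X2 → ℝ, IsJointDist P → IsJointDist Q →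
    margin2 P = margin2 Q → condEntFull P W1 = condEntFull Q W1

/-- Condition (b2), part (ii), relative to the common optimal input `Pstar`:
H⁽¹⁾(Y₁|X₁) ≤ H⁽²⁾(Y₁|X₁) where P⁽²⁾ = P*_{X₁}·P⁽¹⁾_{X₂}. -/
def CondB2ii (W1 : X1 → X2 → Y1 → ℝ) (Pstar : X1 → ℝ) : Prop :=
  ∀ P : X1 → X2 → ℝ, IsJointDist P →
    condEntY1X1 P W1 ≤ condEntY1X1 (fun x1 x2 => Pstar x1 * margin2 P x2) W1


-- test basic lemmas
open Finset in
lemma mutInfo_eq_ent {A B : Type*} [Fintype A] [Fintype B] (P : A → ℝ) (W : A → B → ℝ)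
    (hP : ∀ a, 0 ≤ P a) (hW : ∀ a b, 0 ≤ W a b) :
    mutInfo P W = ent (fun b => ∑ a, P a * W a b) - ∑ a, P a * ent (W a) := by
  have key : ∀ a b, P a * W a b * Real.logb 2 (W a b / ∑ a', P a' * W a' b)
      = P a * W a b * Real.logb 2 (W a b)
        - P a * W a b * Real.logb 2 (∑ a', P a' * W a' b) := by
    intro a b
    rcases eq_or_lt_of_le (mul_nonneg (hP a) (hW a b)) with h | h
    · rw [← h]; ring
    · have hq : 0 < ∑ a', P a' * W a' b :=
        lt_of_lt_of_le h (Finset.single_le_sum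
          (fun i _ => mul_nonneg (hP i) (hW i b)) (Finset.mem_univ a))
      have hw : W a b ≠ 0 := by
        intro h0; rw [h0, mul_zero] at h; exact lt_irrefl 0 h
      rw [Real.logb_div hw (ne_of_gt hq), mul_sub]
  unfold mutInfo ent
  simp only [key, Finset.sum_sub_distrib]
  have h1 : ∑ a, ∑ b, P a * W a b * Real.logb 2 (W a b)
      = ∑ a, P a * ∑ b, W a b * Real.logb 2 (W a b) := by
    apply Finset.sum_congr rfl; intro a _
    rw [Finset.mul_sum]; apply Finset.sum_congr rfl; intro b _; ring
  have h2 : ∑ a, ∑ b, P a * W a b * Real.logb 2 (∑ a', P a' * W a' b)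
      = ∑ b, (∑ a, P a * W a b) * Real.logb 2 (∑ a', P a' * W a' b) := by
    rw [Finset.sum_comm]
    apply Finset.sum_congr rfl; intro b _
    rw [Finset.sum_mul]
  rw [h1, h2]
  simp only [mul_neg, Finset.sum_neg_distrib]
  ring
lemma ent_eq_negMulLog {B : Type*} [Fintype B] (Q : B → ℝ) :
    ent Q = (∑ b, Real.negMulLog (Q b)) / Real.log 2 := by
  unfold ent
  rw [Finset.sum_div, ← Finset.sum_neg_distrib]
  apply Finset.sum_congr rfl; intro b _
  rw [Real.negMulLog, Real.logb]
  field_simp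

lemma ent_concave {B : Type*} [Fintype B] (u v : B → ℝ) (hu : ∀ b, 0 ≤ u b)
    (hv : ∀ b, 0 ≤ v b) {a c : ℝ} (ha : 0 ≤ a) (hc : 0 ≤ c) (hac : a + c = 1) :
    a * ent u + c * ent v ≤ ent (fun b => a * u b + c * v b) := by
  simp only [ent_eq_negMulLog]
  rw [mul_div_assoc', mul_div_assoc', ← add_div]
  have hlog : (0:ℝ) < Real.log 2 := Real.log_pos one_lt_two
  rw [div_le_div_iff_of_pos_right hlog]
  rw [Finset.mul_sum, Finset.mul_sum, ← Finset.sum_add_distrib]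
  apply Finset.sum_le_sum
  intro b _
  have := Real.concaveOn_negMulLog.2 (Set.mem_Ici.mpr (hu b))
    (Set.mem_Ici.mpr (hv b)) ha hc hac
  simpa using this
lemma margin1_prod (Pstar : X1 → ℝ) (Q : X2 → ℝ) (hQ1 : ∑ x2, Q x2 = 1) :
    margin1 (fun x1 x2 => Pstar x1 * Q x2) = Pstar := by
  funext x1; unfold margin1; rw [← Finset.mul_sum, hQ1, mul_one]

lemma margin2_prod (Pstar : X1 → ℝ) (hPs : ∑ x1, Pstar x1 = 1) (Q : X2 → ℝ) :
    margin2 (fun x1 x2 => Pstar x1 * Q x2) = Q := by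
  funext x2; unfold margin2; rw [← Finset.sum_mul, hPs, one_mul]

lemma condMI12_prod (Pstar : X1 → ℝ) (hPs : ∑ x1, Pstar x1 = 1) (Q : X2 → ℝ)
    (W2 : X1 → X2 → Y2 → ℝ) :
    condMI12 (fun x1 x2 => Pstar x1 * Q x2) W2
      = ∑ x2, Q x2 * mutInfo Pstar (fun x1 => W2 x1 x2) := by
  unfold condMI12
  rw [margin2_prod Pstar hPs Q]
  apply Finset.sum_congr rfl; intro x2 _
  by_cases h : Q x2 = 0
  · rw [h, zero_mul, zero_mul]
  · congr 1
    have : cond1given2 (fun x1 x2 => Pstar x1 * Q x2) x2 = Pstar := by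
      funext x1
      unfold cond1given2
      rw [margin2_prod Pstar hPs Q]
      show Pstar x1 * Q x2 / Q x2 = Pstar x1
      rw [mul_div_assoc, div_self h, mul_one]
    rw [this]

lemma condMI21_prod (Pstar : X1 → ℝ) (Q : X2 → ℝ) (hQ1 : ∑ x2, Q x2 = 1)
    (W1 : X1 → X2 → Y1 → ℝ) :
    condMI21 (fun x1 x2 => Pstar x1 * Q x2) W1
      = ∑ x1, Pstar x1 * mutInfo Q (fun x2 => W1 x1 x2) := by
  unfold condMI21
  rw [margin1_prod Pstar Q hQ1]
  apply Finset.sum_congr rfl; intro x1 _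
  by_cases h : Pstar x1 = 0
  · rw [h, zero_mul, zero_mul]
  · congr 1
    have : cond2given1 (fun x1 x2 => Pstar x1 * Q x2) x1 = Q := by
      funext x2
      unfold cond2given1
      rw [margin1_prod Pstar Q hQ1]
      show Pstar x1 * Q x2 / Pstar x1 = Q x2
      rw [mul_comm, mul_div_assoc, div_self h, mul_one]
    rw [this]

lemma condMI21_eq_ent (P : X1 → X2 → ℝ) (hP : ∀ x1 x2, 0 ≤ P x1 x2)
    (W1 : X1 → X2 → Y1 → ℝ) (hW1 : ∀ x1 x2 y, 0 ≤ W1 x1 x2 y) :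
    condMI21 P W1 = condEntY1X1 P W1 - condEntFull P W1 := by
  unfold condMI21 condEntY1X1 condEntFull
  rw [← Finset.sum_sub_distrib]
  apply Finset.sum_congr rfl; intro x1 _
  have hm : 0 ≤ margin1 P x1 :=
    Finset.sum_nonneg (fun x2 _ => hP x1 x2)
  by_cases h : margin1 P x1 = 0
  · have hz : ∀ x2, P x1 x2 = 0 := by
      intro x2
      have := (Finset.sum_eq_zero_iff_of_nonneg
        (fun x2 _ => hP x1 x2)).mp h x2 (Finset.mem_univ x2)
      exact this
    simp [h, hz]
  · rw [mutInfo_eq_ent (cond2given1 P x1) (fun x2 => W1 x1 x2)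
      (fun x2 => div_nonneg (hP x1 x2) hm) (hW1 x1)]
    rw [mul_sub]
    congr 1
    rw [Finset.mul_sum]
    apply Finset.sum_congr rfl; intro x2 _
    unfold cond2given1
    field_simp
/-- Auxiliary: rate bound R₁ as a function of the X₂-marginal. -/
noncomputable def fAux (W2 : X1 → X2 → Y2 → ℝ) (Pstar : X1 → ℝ) (Q : X2 → ℝ) : ℝ :=
  ∑ x2, Q x2 * mutInfo Pstar (fun x1 => W2 x1 x2)

/-- Auxiliary: rate bound R₂ as a function of the X₂-marginal. -/
noncomputable def gAux (W1 : X1 → X2 → Y1 → ℝ) (Pstar : X1 → ℝ) (Q : X2 → ℝ) : ℝ :=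
  ∑ x1, Pstar x1 *
    (ent (fun y => ∑ x2, Q x2 * W1 x1 x2 y) - ∑ x2, Q x2 * ent (W1 x1 x2))

/-- Auxiliary: candidate for both capacity regions. -/
def TAux (W1 : X1 → X2 → Y1 → ℝ) (W2 : X1 → X2 → Y2 → ℝ) (Pstar : X1 → ℝ) :
    Set (ℝ × ℝ) :=
  {r | ∃ Q : X2 → ℝ, IsDist Q ∧ 0 ≤ r.1 ∧ r.1 ≤ fAux W2 Pstar Q ∧ 0 ≤ r.2 ∧
    r.2 ≤ gAux W1 Pstar Q}

lemma fAux_eq (W2 : X1 → X2 → Y2 → ℝ) (Pstar : X1 → ℝ) (hPs1 : ∑ x1, Pstar x1 = 1)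
    (Q : X2 → ℝ) :
    condMI12 (fun x1 x2 => Pstar x1 * Q x2) W2 = fAux W2 Pstar Q :=
  condMI12_prod Pstar hPs1 Q W2

lemma gAux_eq (W1 : X1 → X2 → Y1 → ℝ) (hW1 : ∀ x1 x2 y, 0 ≤ W1 x1 x2 y)
    (Pstar : X1 → ℝ) (Q : X2 → ℝ) (hQ : IsDist Q) :
    condMI21 (fun x1 x2 => Pstar x1 * Q x2) W1 = gAux W1 Pstar Q := by
  rw [condMI21_prod Pstar Q hQ.2]
  apply Finset.sum_congr rfl; intro x1 _
  rw [mutInfo_eq_ent Q (fun x2 => W1 x1 x2) hQ.1 (fun x2 => hW1 x1 x2)]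

lemma isDist_margin2 (P : X1 → X2 → ℝ) (hP : IsJointDist P) : IsDist (margin2 P) := by
  constructor
  · exact fun x2 => Finset.sum_nonneg fun x1 _ => hP.1 x1 x2
  · rw [← hP.2, Finset.sum_comm]; rfl

lemma isJointDist_prod (Pstar : X1 → ℝ) (hPs : IsDist Pstar) (Q : X2 → ℝ)
    (hQ : IsDist Q) : IsJointDist (fun x1 x2 => Pstar x1 * Q x2) := by
  constructor
  · exact fun x1 x2 => mul_nonneg (hPs.1 x1) (hQ.1 x2)
  · simp only [← Finset.mul_sum, hQ.2, mul_one]; exact hPs.2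
lemma rateRegion_subset_TAux (W1 : X1 → X2 → Y1 → ℝ) (W2 : X1 → X2 → Y2 → ℝ)
    (hW1 : ∀ x1 x2 y, 0 ≤ W1 x1 x2 y)
    (Pstar : X1 → ℝ) (ha : CondA W2 Pstar)
    (hb2i : CondB2i W1) (hb2ii : CondB2ii W1 Pstar)
    (P : X1 → X2 → ℝ) (hP : IsJointDist P) :
    rateRegion W1 W2 P ⊆ TAux W1 W2 Pstar := by
  obtain ⟨hPs, hopt⟩ := ha
  intro r hr
  obtain ⟨h1, h2, h3, h4⟩ := hr
  have hm2 : IsDist (margin2 P) := isDist_margin2 P hP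
  refine ⟨margin2 P, hm2, h1, le_trans h2 ?_, h3, le_trans h4 ?_⟩
  · -- condMI12 P W2 ≤ fAux W2 Pstar (margin2 P)
    unfold condMI12 fAux
    apply Finset.sum_le_sum
    intro x2 _
    have hm : 0 ≤ margin2 P x2 := hm2.1 x2
    rcases hm.eq_or_lt with h | h
    · rw [← h, zero_mul, zero_mul]
    · apply mul_le_mul_of_nonneg_left ?_ hm
      refine hopt x2 (cond1given2 P x2) ⟨fun x1 => div_nonneg (hP.1 x1 x2) hm, ?_⟩
      unfold cond1given2
      rw [← Finset.sum_div]
      exact div_self (ne_of_gt h)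
  · -- condMI21 P W1 ≤ gAux W1 Pstar (margin2 P)
    have hprod : IsJointDist (fun x1 x2 => Pstar x1 * margin2 P x2) :=
      isJointDist_prod Pstar hPs (margin2 P) hm2
    have hmargeq : margin2 P = margin2 (fun x1 x2 => Pstar x1 * margin2 P x2) :=
      (margin2_prod Pstar hPs.2 (margin2 P)).symm
    have hfull : condEntFull P W1
        = condEntFull (fun x1 x2 => Pstar x1 * margin2 P x2) W1 :=
      hb2i P _ hP hprod hmargeq
    calc condMI21 P W1 = condEntY1X1 P W1 - condEntFull P W1 :=
          condMI21_eq_ent P hP.1 W1 hW1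
      _ ≤ condEntY1X1 (fun x1 x2 => Pstar x1 * margin2 P x2) W1
          - condEntFull (fun x1 x2 => Pstar x1 * margin2 P x2) W1 :=
          sub_le_sub (hb2ii P hP) (le_of_eq hfull.symm)
      _ = condMI21 (fun x1 x2 => Pstar x1 * margin2 P x2) W1 :=
          (condMI21_eq_ent _ hprod.1 W1 hW1).symm
      _ = gAux W1 Pstar (margin2 P) := gAux_eq W1 hW1 Pstar (margin2 P) hm2

lemma TAux_subset_rateRegion (W1 : X1 → X2 → Y1 → ℝ) (W2 : X1 → X2 → Y2 → ℝ)
    (hW1 : ∀ x1 x2 y, 0 ≤ W1 x1 x2 y) (Pstar : X1 → ℝ) (hPs : IsDist Pstar)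
    (r : ℝ × ℝ) (hr : r ∈ TAux W1 W2 Pstar) :
    ∃ Q : X2 → ℝ, IsDist Q ∧ r ∈ rateRegion W1 W2 (fun x1 x2 => Pstar x1 * Q x2) := by
  obtain ⟨Q, hQ, h1, h2, h3, h4⟩ := hr
  refine ⟨Q, hQ, h1, ?_, h3, ?_⟩
  · rw [fAux_eq W2 Pstar hPs.2 Q]; exact h2
  · rw [gAux_eq W1 hW1 Pstar Q hQ]; exact h4
lemma convex_TAux (W1 : X1 → X2 → Y1 → ℝ) (W2 : X1 → X2 → Y2 → ℝ)
    (hW1 : ∀ x1 x2 y, 0 ≤ W1 x1 x2 y) (Pstar : X1 → ℝ) (hPs : IsDist Pstar) :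
    Convex ℝ (TAux W1 W2 Pstar) := by
  intro r hr r' hr' a b ha hb hab
  obtain ⟨Q, hQ, h1, h2, h3, h4⟩ := hr
  obtain ⟨Q', hQ', h1', h2', h3', h4'⟩ := hr'
  have hfst : (a • r + b • r').1 = a * r.1 + b * r'.1 := rfl
  have hsnd : (a • r + b • r').2 = a * r.2 + b * r'.2 := rfl
  refine ⟨fun x2 => a * Q x2 + b * Q' x2,
    ⟨fun x2 => add_nonneg (mul_nonneg ha (hQ.1 x2)) (mul_nonneg hb (hQ'.1 x2)), by
      rw [Finset.sum_add_distrib, ← Finset.mul_sum, ← Finset.mul_sum, hQ.2, hQ'.2,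
        mul_one, mul_one, hab]⟩, ?_, ?_, ?_, ?_⟩
  · rw [hfst]; exact add_nonneg (mul_nonneg ha h1) (mul_nonneg hb h1')
  · rw [hfst]
    have : fAux W2 Pstar (fun x2 => a * Q x2 + b * Q' x2)
        = a * fAux W2 Pstar Q + b * fAux W2 Pstar Q' := by
      unfold fAux
      rw [Finset.mul_sum, Finset.mul_sum, ← Finset.sum_add_distrib]
      apply Finset.sum_congr rfl; intro x2 _; ring
    rw [this]
    exact add_le_add (mul_le_mul_of_nonneg_left h2 ha) (mul_le_mul_of_nonneg_left h2' hb)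
  · rw [hsnd]; exact add_nonneg (mul_nonneg ha h3) (mul_nonneg hb h3')
  · rw [hsnd]
    have hgoal : a * gAux W1 Pstar Q + b * gAux W1 Pstar Q'
        ≤ gAux W1 Pstar (fun x2 => a * Q x2 + b * Q' x2) := by
      unfold gAux
      rw [Finset.mul_sum, Finset.mul_sum, ← Finset.sum_add_distrib]
      apply Finset.sum_le_sum
      intro x1 _
      have hent : a * ent (fun y => ∑ x2, Q x2 * W1 x1 x2 y)
          + b * ent (fun y => ∑ x2, Q' x2 * W1 x1 x2 y)
          ≤ ent (fun y => ∑ x2, (a * Q x2 + b * Q' x2) * W1 x1 x2 y) := by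
        have hmix : (fun y => ∑ x2, (a * Q x2 + b * Q' x2) * W1 x1 x2 y)
            = fun y => a * (∑ x2, Q x2 * W1 x1 x2 y)
              + b * (∑ x2, Q' x2 * W1 x1 x2 y) := by
          funext y
          rw [Finset.mul_sum, Finset.mul_sum, ← Finset.sum_add_distrib]
          apply Finset.sum_congr rfl; intro x2 _; ring
        rw [hmix]
        exact ent_concave _ _
          (fun y => Finset.sum_nonneg fun x2 _ => mul_nonneg (hQ.1 x2) (hW1 x1 x2 y))
          (fun y => Finset.sum_nonneg fun x2 _ => mul_nonneg (hQ'.1 x2) (hW1 x1 x2 y))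
          ha hb hab
      have hlin : ∑ x2, (a * Q x2 + b * Q' x2) * ent (W1 x1 x2)
          = a * ∑ x2, Q x2 * ent (W1 x1 x2) + b * ∑ x2, Q' x2 * ent (W1 x1 x2) := by
        rw [Finset.mul_sum, Finset.mul_sum, ← Finset.sum_add_distrib]
        apply Finset.sum_congr rfl; intro x2 _; ring
      calc a * (Pstar x1 * (ent (fun y => ∑ x2, Q x2 * W1 x1 x2 y)
              - ∑ x2, Q x2 * ent (W1 x1 x2)))
            + b * (Pstar x1 * (ent (fun y => ∑ x2, Q' x2 * W1 x1 x2 y)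
              - ∑ x2, Q' x2 * ent (W1 x1 x2)))
          = Pstar x1 * ((a * ent (fun y => ∑ x2, Q x2 * W1 x1 x2 y)
              + b * ent (fun y => ∑ x2, Q' x2 * W1 x1 x2 y))
            - (a * ∑ x2, Q x2 * ent (W1 x1 x2)
              + b * ∑ x2, Q' x2 * ent (W1 x1 x2))) := by ring
        _ ≤ Pstar x1 * (ent (fun y => ∑ x2, (a * Q x2 + b * Q' x2) * W1 x1 x2 y)
            - ∑ x2, (a * Q x2 + b * Q' x2) * ent (W1 x1 x2)) := by
            apply mul_le_mul_of_nonneg_left ?_ (hPs.1 x1)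
            rw [hlin]
            exact sub_le_sub hent (le_refl _)
    calc a * r.2 + b * r'.2 ≤ a * gAux W1 Pstar Q + b * gAux W1 Pstar Q' :=
          add_le_add (mul_le_mul_of_nonneg_left h4 ha) (mul_le_mul_of_nonneg_left h4' hb)
      _ ≤ _ := hgoal
lemma continuous_fAux (W2 : X1 → X2 → Y2 → ℝ) (Pstar : X1 → ℝ) :
    Continuous (fAux W2 Pstar) := by
  unfold fAux
  exact continuous_finset_sum _ fun x2 _ => (continuous_apply x2).mul continuous_const

lemma continuous_gAux (W1 : X1 → X2 → Y1 → ℝ) (Pstar : X1 → ℝ) :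
    Continuous (gAux W1 Pstar) := by
  unfold gAux
  apply continuous_finset_sum _ fun x1 _ => ?_
  apply Continuous.mul continuous_const
  apply Continuous.sub
  · have : (fun Q : X2 → ℝ => ent (fun y => ∑ x2, Q x2 * W1 x1 x2 y))
        = fun Q : X2 → ℝ =>
          (∑ y, Real.negMulLog (∑ x2, Q x2 * W1 x1 x2 y)) / Real.log 2 := by
      funext Q; exact ent_eq_negMulLog _
    rw [this]
    apply Continuous.div_const
    apply continuous_finset_sum _ fun y _ => ?_
    exact Real.continuous_negMulLog.comp
      (continuous_finset_sum _ fun x2 _ => (continuous_apply x2).mul continuous_const)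
  · exact continuous_finset_sum _ fun x2 _ => (continuous_apply x2).mul continuous_const

open scoped Pointwise in
lemma isClosed_TAux (W1 : X1 → X2 → Y1 → ℝ) (W2 : X1 → X2 → Y2 → ℝ)
    (Pstar : X1 → ℝ) : IsClosed (TAux W1 W2 Pstar) := by
  classical
  set K : Set (ℝ × ℝ) :=
    (fun Q => (fAux W2 Pstar Q, gAux W1 Pstar Q)) '' stdSimplex ℝ X2 with hK
  have hKc : IsCompact K :=
    (isCompact_stdSimplex ℝ X2).image
      ((continuous_fAux W2 Pstar).prodMk (continuous_gAux W1 Pstar))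
  have heq : TAux W1 W2 Pstar
      = (Set.Ici (0:ℝ) ×ˢ Set.Ici (0:ℝ)) ∩ (K + Set.Iic ((0,0) : ℝ × ℝ)) := by
    ext r
    constructor
    · rintro ⟨Q, hQ, h1, h2, h3, h4⟩
      refine ⟨⟨h1, h3⟩, ?_⟩
      rw [Set.mem_add]
      refine ⟨(fAux W2 Pstar Q, gAux W1 Pstar Q), ⟨Q, ⟨hQ.1, hQ.2⟩, rfl⟩,
        r - (fAux W2 Pstar Q, gAux W1 Pstar Q), ?_, by abel⟩
      rw [Set.mem_Iic]
      exact ⟨by simpa using sub_nonpos.mpr h2, by simpa using sub_nonpos.mpr h4⟩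
    · rintro ⟨⟨h1, h3⟩, hmem⟩
      rw [Set.mem_add] at hmem
      obtain ⟨k, hk, v, hv, hkv⟩ := hmem
      obtain ⟨Q, hQs, rfl⟩ := hk
      refine ⟨Q, ⟨hQs.1, hQs.2⟩, h1, ?_, h3, ?_⟩
      · have heq1 : r.1 = fAux W2 Pstar Q + v.1 := by rw [← hkv]; rfl
        have hv1 : v.1 ≤ 0 := (Set.mem_Iic.mp hv).1
        rw [heq1]; linarith
      · have heq2 : r.2 = gAux W1 Pstar Q + v.2 := by rw [← hkv]; rfl
        have hv2 : v.2 ≤ 0 := (Set.mem_Iic.mp hv).2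
        rw [heq2]; linarith
  rw [heq]
  exact (isClosed_Ici.prod isClosed_Ici).inter
    (IsClosed.add_left_of_isCompact isClosed_Iic hKc)

/-- if the DM-TWC satisfies conditions (a) and (b2), then C_I = C_O. -/
theorem stmt9 [Nonempty X1] [Nonempty X2]
    (W1 : X1 → X2 → Y1 → ℝ) (W2 : X1 → X2 → Y2 → ℝ)
    (hW1 : ∀ x1 x2, IsDist (W1 x1 x2)) (hW2 : ∀ x1 x2, IsDist (W2 x1 x2))
    (Pstar : X1 → ℝ) (ha : CondA W2 Pstar)
    (hb2i : CondB2i W1) (hb2ii : CondB2ii W1 Pstar) :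
    innerBound W1 W2 = outerBound W1 W2 := by
  have hW1nn : ∀ x1 x2 y, 0 ≤ W1 x1 x2 y := fun x1 x2 y => (hW1 x1 x2).1 y
  have hPs : IsDist Pstar := ha.1
  have hS : (⋃ P ∈ {P : X1 → X2 → ℝ |
      ∃ P1 P2, IsDist P1 ∧ IsDist P2 ∧ P = fun x1 x2 => P1 x1 * P2 x2},
      rateRegion W1 W2 P) = TAux W1 W2 Pstar := by
    apply subset_antisymm
    · apply Set.iUnion₂_subset
      rintro P ⟨P1, P2, hP1, hP2, rfl⟩
      exact rateRegion_subset_TAux W1 W2 hW1nn Pstar ha hb2i hb2ii _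
        (isJointDist_prod P1 hP1 P2 hP2)
    · intro r hr
      obtain ⟨Q, hQ, hmem⟩ := TAux_subset_rateRegion W1 W2 hW1nn Pstar hPs r hr
      exact Set.mem_biUnion ⟨Pstar, Q, hPs, hQ, rfl⟩ hmem
  have hO : outerBound W1 W2 = TAux W1 W2 Pstar := by
    apply subset_antisymm
    · apply Set.iUnion₂_subset
      intro P hP
      exact rateRegion_subset_TAux W1 W2 hW1nn Pstar ha hb2i hb2ii P hP
    · intro r hr
      obtain ⟨Q, hQ, hmem⟩ := TAux_subset_rateRegion W1 W2 hW1nn Pstar hPs r hr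
      exact Set.mem_biUnion (isJointDist_prod Pstar hPs Q hQ) hmem
  unfold innerBound
  rw [hS, (convex_TAux W1 W2 hW1nn Pstar hPs).convexHull_eq,
    (isClosed_TAux W1 W2 Pstar).closure_eq, hO]

end TWC
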